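/- The symmetric energy barrier is a phase invariant: if H_A and H_B are commuting Pauli (stabilizer) Hamiltonians with symmetry S(g) such that H_B = U(H_A + H_anc)U† for a constant-depth local unitary U commuting with S(g), where H_anc is a sum of non-interacting single-site projector terms on ancilla qubits in a symmetric state, then H_A and H_B have the same symmetric energy barrier: every symmetric local decomposition {l^(k)} of a logical operator of H_A yields the symmetric local decomposition {U l^(k) U†} of a logical operator of H_B with identical intermediate energies, and conversely. -/

import Mathlib

/-!
# Statement 13

The symmetric energy barrier is a phase invariant: if `H_A` and `H_B` are
commuting Pauli (stabilizer) Hamiltonians with symmetry `S(g)` such that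
`H_B = U (H_A + H_anc) U†` for a constant-depth local unitary `U` commuting
with `S(g)`, where `H_anc` is a sum of non-interacting single-site projector
terms on ancilla qubits in a symmetric state, then `H_A` and `H_B` have the
same symmetric energy barrier: every symmetric local decomposition `{l⁽ᵏ⁾}`
of a logical operator of `H_A` yields the symmetric local decomposition
`{U l⁽ᵏ⁾ U†}` of a logical operator of `H_B` with identical intermediate
energies, and conversely.

A constant-depth local Clifford unitary `U` is modelled by its conjugation
action on the Pauli group: an automorphism of the Pauli group preserving the
commutation (symplectic) form and increasing the range of supports by at most
a constant `c`.
-/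

/-- A Pauli operator (modulo phase) on qubits indexed by `Q`, given by the
supports of its `X` and `Z` parts. -/
structure Pauli (Q : Type*) [DecidableEq Q] where
  X : Finset Q
  Z : Finset Q

namespace Pauli

variable {Q : Type*} [DecidableEq Q]

instance : One (Pauli Q) := ⟨⟨∅, ∅⟩⟩
instance : Mul (Pauli Q) := ⟨fun P R => ⟨symmDiff P.X R.X, symmDiff P.Z R.Z⟩⟩

theorem mul_def (P R : Pauli Q) : P * R = ⟨symmDiff P.X R.X, symmDiff P.Z R.Z⟩ := rfl
theorem one_def : (1 : Pauli Q) = ⟨∅, ∅⟩ := rfl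

/-- Pauli operators modulo phase form a commutative monoid (in fact an
elementary abelian 2-group). -/
instance : CommMonoid (Pauli Q) where
  mul_assoc a b c := by simp [mul_def, symmDiff_assoc]
  one_mul a := by cases a; simp [mul_def, one_def, ← Finset.bot_eq_empty]
  mul_one a := by cases a; simp [mul_def, one_def, ← Finset.bot_eq_empty]
  mul_comm a b := by simp [mul_def, symmDiff_comm]

/-- Pauli X on a single qubit. -/
def Xop (q : Q) : Pauli Q := ⟨{q}, ∅⟩
/-- Pauli Z on a single qubit. -/
def Zop (q : Q) : Pauli Q := ⟨∅, {q}⟩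
/-- The product of Pauli X over a finite set of qubits. -/
def XOn (S : Finset Q) : Pauli Q := ⟨S, ∅⟩
/-- The product of Pauli Z over a finite set of qubits. -/
def ZOn (S : Finset Q) : Pauli Q := ⟨∅, S⟩
/-- The support of a Pauli operator. -/
def supp (P : Pauli Q) : Finset Q := P.X ∪ P.Z

/-- The symplectic form: `omega P R = 0` iff the two Pauli operators commute
(as actual operators, for any choice of phases), and `omega P R = 1` iff they
anticommute. -/
def omega (P R : Pauli Q) : ZMod 2 :=
  ((P.X ∩ R.Z).card : ZMod 2) + ((R.X ∩ P.Z).card : ZMod 2)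

end Pauli

namespace Pauli

variable {Q : Type*} [DecidableEq Q] [Fintype Q]

/-- A Clifford automorphism of the Pauli group: the conjugation action
`P ↦ U P U†` of a Clifford unitary, a bijection preserving products and the
commutation form. -/
structure CliffordAut (Q : Type*) [DecidableEq Q] where
  toEquiv : Pauli Q ≃ Pauli Q
  map_mul : ∀ P R : Pauli Q, toEquiv (P * R) = toEquiv P * toEquiv R
  map_omega : ∀ P R : Pauli Q, omega (toEquiv P) (toEquiv R) = omega P R

variable (dist : Q → Q → ℕ)

/-- A Pauli operator is `r`-local when its support has diameter at most `r`
for the distance `dist`. -/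
def IsLocal (r : ℕ) (P : Pauli Q) : Prop :=
  ∀ q ∈ P.supp, ∀ q' ∈ P.supp, dist q q' ≤ r

variable {S : Type*} (sym : S → Pauli Q)

/-- A Pauli operator is symmetric when it commutes with every symmetry
operator `S(g)`. -/
def Symm (P : Pauli Q) : Prop := ∀ s : S, omega P (sym s) = 0

/-- A symmetric local decomposition of a Pauli operator `l̄`: a sequence of
Pauli operators starting at the identity and ending at `l̄`, each commuting
with all the symmetry operators, with consecutive operators differing only by
an `r`-local operator. -/
def IsSymLocalDecomp (r : ℕ) (lbar : Pauli Q) (L : List (Pauli Q)) : Prop :=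
  L ≠ [] ∧ L.head? = some 1 ∧ L.getLast? = some lbar ∧
    (∀ P ∈ L, Symm sym P) ∧ L.Chain' fun P P' => IsLocal dist r (P * P')

variable {T : Type*} [Fintype T]

/-- The energy of the state `P|ψ₀⟩` above the ground energy, for the
stabilizer Hamiltonian `H = -Σ_t term t`: twice the number of terms flipped
by `P`. -/
def energyOf (term : T → Pauli Q) (P : Pauli Q) : ℕ :=
  2 * (Finset.univ.filter fun t : T => omega (term t) P = 1).card

/-- The maximal intermediate energy along a decomposition. -/
def maxEnergyOf (term : T → Pauli Q) (L : List (Pauli Q)) : ℕ :=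
  (L.map (energyOf term)).foldr max 0

/-- A (nontrivial) Pauli logical operator of the stabilizer Hamiltonian
`H = -Σ_t term t`: it commutes with every term but is not a product of
terms. -/
def IsLogicalOf (term : T → Pauli Q) (P : Pauli Q) : Prop :=
  (∀ t : T, omega (term t) P = 0) ∧ P ∉ Submonoid.closure (Set.range term)

/-- The symmetric energy barrier of the stabilizer Hamiltonian
`H = -Σ_t term t`: the least barrier of any symmetric local decomposition
(of any constant range `r`) of any logical operator. -/
noncomputable def symBarrierOf (term : T → Pauli Q) : ℕ :=
  sInf {B : ℕ | ∃ (r : ℕ) (lbar : Pauli Q) (L : List (Pauli Q)),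
    IsLogicalOf term lbar ∧ IsSymLocalDecomp dist sym r lbar L ∧
    B = maxEnergyOf term L}

end Pauli

open Pauli

/-- If `H_B = U (H_A + H_anc) U†` for a constant-depth local
Clifford unitary `U` commuting with the symmetry, where `H_anc` consists of
non-interacting single-site terms on ancilla qubits (disjoint from the
support of `H_A`), then conjugation by `U` carries logical operators to
logical operators and symmetric local decompositions to symmetric local
decompositions with identical intermediate energies (and conversely, via
`U⁻¹`); in particular `H_A` and `H_B` have the same symmetric energy
barrier. -/
theorem symmetric_energy_barrier_is_phase_invariant
    {Q : Type*} [DecidableEq Q] [Fintype Q] (dist : Q → Q → ℕ)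
    {S : Type*} (sym : S → Pauli Q)
    -- the terms of the stabilizer Hamiltonian `H_A` (mutually commuting):
    {TA : Type*} [Fintype TA] (termA : TA → Pauli Q)
    (hAcomm : ∀ t t' : TA, omega (termA t) (termA t') = 0)
    -- the ancilla qubits, their single-site terms, and disjointness from `H_A`:
    {Anc : Type*} [Fintype Anc] (ancQ : Anc → Q) (hancInj : Function.Injective ancQ)
    (hancDisj : ∀ (t : TA) (a : Anc), ancQ a ∉ (termA t).supp)
    (hancSym : ∀ (a : Anc) (s : S), omega (Pauli.Zop (ancQ a)) (sym s) = 0)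
    -- the terms of the stabilizer Hamiltonian `H_B`:
    {TB : Type*} [Fintype TB] (termB : TB → Pauli Q)
    -- the constant-depth local Clifford unitary `U`, commuting with the
    -- symmetry, with depth constant `c`:
    (U : CliffordAut Q) (c : ℕ)
    (hUloc : ∀ (r : ℕ) (P : Pauli Q), IsLocal dist r P → IsLocal dist (r + c) (U.toEquiv P))
    (hUlocInv : ∀ (r : ℕ) (P : Pauli Q), IsLocal dist r P → IsLocal dist (r + c) (U.toEquiv.symm P))
    (hUsym : ∀ s : S, U.toEquiv (sym s) = sym s)
    -- `H_B = U (H_A + H_anc) U†`: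
    (eqv : TB ≃ TA ⊕ Anc)
    (hB : ∀ t : TB, termB t =
      U.toEquiv (Sum.elim termA (fun a => Pauli.Zop (ancQ a)) (eqv t))) :
    -- conjugation preserves energies, logical operators and symmetric local
    -- decompositions (in both directions) ...
    (∀ P : Pauli Q,
      energyOf termB (U.toEquiv P)
        = energyOf (Sum.elim termA fun a => Pauli.Zop (ancQ a)) P) ∧
    (∀ lbar : Pauli Q,
      IsLogicalOf (Sum.elim termA fun a => Pauli.Zop (ancQ a)) lbar ↔
        IsLogicalOf termB (U.toEquiv lbar)) ∧
    (∀ (r : ℕ) (lbar : Pauli Q) (L : List (Pauli Q)),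
      IsSymLocalDecomp dist sym r lbar L →
        IsSymLocalDecomp dist sym (r + c) (U.toEquiv lbar) (L.map U.toEquiv)) ∧
    (∀ (r : ℕ) (lbar : Pauli Q) (L : List (Pauli Q)),
      IsSymLocalDecomp dist sym r lbar L →
        IsSymLocalDecomp dist sym (r + c) (U.toEquiv.symm lbar) (L.map U.toEquiv.symm)) ∧
    -- ... hence `H_A` (with its decoupled ancillas) and `H_B` have the same
    -- symmetric energy barrier:
    symBarrierOf dist sym (Sum.elim termA fun a => Pauli.Zop (ancQ a))
      = symBarrierOf dist sym termB := by

  classical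
  -- the Clifford automorphism as a multiplicative equivalence
  let e : Pauli Q ≃* Pauli Q := { U.toEquiv with map_mul' := U.map_mul }
  have he : ∀ P, e P = U.toEquiv P := fun _ => rfl
  have hes : ∀ P, e.symm P = U.toEquiv.symm P := fun _ => rfl
  have hone : U.toEquiv 1 = 1 := by rw [← he]; exact e.map_one
  have honeS : U.toEquiv.symm 1 = 1 := by rw [← hes]; exact e.symm.map_one
  have hmulS : ∀ P R : Pauli Q,
      U.toEquiv.symm (P * R) = U.toEquiv.symm P * U.toEquiv.symm R := by
    intro P R; rw [← hes, ← hes, ← hes]; exact map_mul e.symm P R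
  have homegaS : ∀ P R : Pauli Q,
      omega (U.toEquiv.symm P) (U.toEquiv.symm R) = omega P R := by
    intro P R
    conv_rhs => rw [← U.toEquiv.apply_symm_apply P, ← U.toEquiv.apply_symm_apply R]
    rw [U.map_omega]
  have hUsymS : ∀ s : S, U.toEquiv.symm (sym s) = sym s := by
    intro s
    conv_lhs => rw [← hUsym s]
    exact U.toEquiv.symm_apply_apply _
  set termC : TA ⊕ Anc → Pauli Q := Sum.elim termA (fun a => Pauli.Zop (ancQ a)) with htermC
  -- energies
  have henergy : ∀ P : Pauli Q, energyOf termB (U.toEquiv P) = energyOf termC P := by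
    intro P
    unfold energyOf
    congr 1
    apply Finset.card_bij' (fun t _ => eqv t) (fun t _ => eqv.symm t)
    · intro t ht
      simp only [Finset.mem_filter, Finset.mem_univ, true_and] at ht ⊢
      rw [hB, U.map_omega] at ht
      exact ht
    · intro t ht
      simp only [Finset.mem_filter, Finset.mem_univ, true_and] at ht ⊢
      rw [hB, U.map_omega, eqv.apply_symm_apply]
      exact ht
    · intro t _; exact eqv.symm_apply_apply t
    · intro t _; exact eqv.apply_symm_apply t
  -- logicals
  have hrange : Set.range termB = ⇑U.toEquiv '' Set.range termC := by
    ext x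
    constructor
    · rintro ⟨t, rfl⟩; exact ⟨termC (eqv t), ⟨eqv t, rfl⟩, (hB t).symm⟩
    · rintro ⟨y, ⟨u, rfl⟩, rfl⟩
      exact ⟨eqv.symm u, by rw [hB, eqv.apply_symm_apply]⟩
  have hlog : ∀ lbar : Pauli Q,
      IsLogicalOf termC lbar ↔ IsLogicalOf termB (U.toEquiv lbar) := by
    intro lbar
    unfold IsLogicalOf
    have him : Submonoid.closure (Set.range termB)
        = Submonoid.map e.toMonoidHom (Submonoid.closure (Set.range termC)) := by
      rw [MonoidHom.map_mclosure, hrange]; rfl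
    constructor
    · rintro ⟨h1, h2⟩
      refine ⟨fun t => by rw [hB, U.map_omega]; exact h1 _, fun hc => h2 ?_⟩
      rw [him] at hc
      rw [Submonoid.mem_map_equiv] at hc
      have h3 : e.symm (U.toEquiv lbar) = lbar := U.toEquiv.symm_apply_apply lbar
      rwa [h3] at hc
    · rintro ⟨h1, h2⟩
      refine ⟨?_, ?_⟩
      · intro t
        have h4 := h1 (eqv.symm t)
        rwa [hB, eqv.apply_symm_apply, U.map_omega] at h4
      · intro hc
        apply h2
        rw [him]
        exact ⟨lbar, hc, rfl⟩
  -- decompositions, forward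
  have hdec : ∀ (r : ℕ) (lbar : Pauli Q) (L : List (Pauli Q)),
      IsSymLocalDecomp dist sym r lbar L →
        IsSymLocalDecomp dist sym (r + c) (U.toEquiv lbar) (L.map U.toEquiv) := by
    rintro r lbar L ⟨hne, hhd, hlast, hsy, hch⟩
    refine ⟨by simpa using hne, ?_, ?_, ?_, ?_⟩
    · rw [List.head?_map, hhd, Option.map_some, hone]
    · rw [List.getLast?_map, hlast, Option.map_some]
    · intro P hP s
      rcases List.mem_map.1 hP with ⟨P', hP', rfl⟩
      rw [← hUsym s, U.map_omega]
      exact hsy P' hP' s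
    · rw [List.Chain', List.isChain_map]
      refine hch.imp ?_
      intro P P' h
      rw [← U.map_mul]
      exact hUloc r _ h
  -- decompositions, backward
  have hdecS : ∀ (r : ℕ) (lbar : Pauli Q) (L : List (Pauli Q)),
      IsSymLocalDecomp dist sym r lbar L →
        IsSymLocalDecomp dist sym (r + c) (U.toEquiv.symm lbar) (L.map U.toEquiv.symm) := by
    rintro r lbar L ⟨hne, hhd, hlast, hsy, hch⟩
    refine ⟨by simpa using hne, ?_, ?_, ?_, ?_⟩
    · rw [List.head?_map, hhd, Option.map_some, honeS]
    · rw [List.getLast?_map, hlast, Option.map_some]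
    · intro P hP s
      rcases List.mem_map.1 hP with ⟨P', hP', rfl⟩
      rw [← hUsymS s, homegaS]
      exact hsy P' hP' s
    · rw [List.Chain', List.isChain_map]
      refine hch.imp ?_
      intro P P' h
      rw [← hmulS]
      exact hUlocInv r _ h
  refine ⟨henergy, hlog, hdec, hdecS, ?_⟩
  -- equality of barriers: the sets of achievable barriers coincide
  unfold symBarrierOf
  congr 1
  ext B
  constructor
  · rintro ⟨r, lbar, L, hlb, hdc, hBeq⟩
    refine ⟨r + c, U.toEquiv lbar, L.map U.toEquiv, (hlog lbar).1 hlb, hdec r lbar L hdc, ?_⟩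
    rw [hBeq]
    unfold maxEnergyOf
    rw [List.map_map]
    congr 1
    apply List.map_congr_left
    intro P _
    exact (henergy P).symm
  · rintro ⟨r, lbar, L, hlb, hdc, hBeq⟩
    refine ⟨r + c, U.toEquiv.symm lbar, L.map U.toEquiv.symm, ?_,
      hdecS r lbar L hdc, ?_⟩
    · rw [hlog, U.toEquiv.apply_symm_apply]; exact hlb
    · rw [hBeq]
      unfold maxEnergyOf
      rw [List.map_map]
      congr 1
      apply List.map_congr_left
      intro P _
      have := henergy (U.toEquiv.symm P)
      rw [U.toEquiv.apply_symm_apply] at this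
      simp only [Function.comp_apply]
      exact this
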